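/- For any polynomial embedding t ↦ (g₁(t), g₂(t), g₃(t)) of ℂ into ℂ³, there exists a tame algebraic automorphism of ℂ³ such that after composing, the second coordinate polynomial divides g₁g₃ − 1 in ℂ[t]. -/

import Mathlib

open Matrix

noncomputable section

/-- An invertible affine-linear self-map of `ℂⁿ`. -/
def IsAffineAut (n : ℕ) (e : (Fin n → ℂ) → (Fin n → ℂ)) : Prop :=
  ∃ A : Matrix (Fin n) (Fin n) ℂ, IsUnit A.det ∧ ∃ b : Fin n → ℂ,
    ∀ v, e v = A.mulVec v + b

/-- An elementary automorphism of `ℂⁿ`: it adds to one coordinate a polynomial in the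
other coordinates. -/
def IsElemAut (n : ℕ) (e : (Fin n → ℂ) → (Fin n → ℂ)) : Prop :=
  ∃ i : Fin n, ∃ h : MvPolynomial (Fin n) ℂ,
    h ∈ MvPolynomial.supported ℂ {j : Fin n | j ≠ i} ∧
    ∀ v j, e v j = if j = i then v i + MvPolynomial.eval v h else v j

/-- A tame automorphism of `ℂⁿ`: an element of the group generated by invertible affine
maps and elementary automorphisms. -/
def IsTame (n : ℕ) (ψ : Equiv.Perm (Fin n → ℂ)) : Prop :=
  ψ ∈ Subgroup.closure {e : Equiv.Perm (Fin n → ℂ) | IsAffineAut n ⇑e ∨ IsElemAut n ⇑e}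

open Polynomial

/-- shear in x-direction: x ↦ x + l z + m -/
def shearX (l m : ℂ) : Equiv.Perm (Fin 3 → ℂ) where
  toFun v := Function.update v 0 (v 0 + (l * v 2 + m))
  invFun v := Function.update v 0 (v 0 - (l * v 2 + m))
  left_inv v := by funext i; fin_cases i <;> simp [Function.update]
  right_inv v := by funext i; fin_cases i <;> simp [Function.update]

lemma shearX_affine (l m : ℂ) : IsAffineAut 3 ⇑(shearX l m) := by
  refine ⟨!![1,0,l;0,1,0;0,0,1], ?_, ![m,0,0], ?_⟩
  · simp [Matrix.det_fin_three]
  · intro v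
    funext i
    fin_cases i <;>
      simp [shearX, Matrix.mulVec, dotProduct, Fin.sum_univ_three, Function.update] <;> ring

/-- translation in y-direction -/
def transY (c : ℂ) : Equiv.Perm (Fin 3 → ℂ) where
  toFun v := Function.update v 1 (v 1 + c)
  invFun v := Function.update v 1 (v 1 - c)
  left_inv v := by funext i; fin_cases i <;> simp [Function.update]
  right_inv v := by funext i; fin_cases i <;> simp [Function.update]

lemma transY_affine (c : ℂ) : IsAffineAut 3 ⇑(transY c) := by
  refine ⟨1, by simp, ![0,c,0], ?_⟩
  intro v
  funext i
  rw [Matrix.one_mulVec]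
  fin_cases i <;> simp [transY, Function.update]

/-- shear in z-direction by a polynomial in x -/
def shearZ (Q : Polynomial ℂ) : Equiv.Perm (Fin 3 → ℂ) where
  toFun v := Function.update v 2 (v 2 + Q.eval (v 0))
  invFun v := Function.update v 2 (v 2 - Q.eval (v 0))
  left_inv v := by funext i; fin_cases i <;> simp [Function.update]
  right_inv v := by funext i; fin_cases i <;> simp [Function.update]

lemma shearZ_elem (Q : Polynomial ℂ) : IsElemAut 3 ⇑(shearZ Q) := by
  refine ⟨2, Polynomial.aeval (MvPolynomial.X (0 : Fin 3)) Q, ?_, ?_⟩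
  · have h1 : Polynomial.aeval (MvPolynomial.X (0 : Fin 3)) Q ∈
        Algebra.adjoin ℂ {(MvPolynomial.X (0 : Fin 3) : MvPolynomial (Fin 3) ℂ)} := by
      rw [Algebra.adjoin_singleton_eq_range_aeval]
      exact ⟨Q, rfl⟩
    refine SetLike.le_def.mp ?_ h1
    rw [MvPolynomial.supported_eq_adjoin_X]
    exact Algebra.adjoin_mono (by
      rintro x rfl
      exact ⟨0, by decide, rfl⟩)
  · intro v j
    have hev : MvPolynomial.eval v (Polynomial.aeval (MvPolynomial.X (0 : Fin 3)) Q)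
        = Q.eval (v 0) := by
      rw [Polynomial.aeval_def, Polynomial.hom_eval₂]
      have hcomp : (MvPolynomial.eval v).comp (algebraMap ℂ (MvPolynomial (Fin 3) ℂ)) = RingHom.id ℂ :=
        RingHom.ext fun c => MvPolynomial.eval_C _
      rw [hcomp, MvPolynomial.eval_X, Polynomial.eval]
    fin_cases j <;> simp [shearZ, Function.update, hev]

lemma deriv_eval_zero_of_sq_dvd {p : ℂ[X]} {a : ℂ} (h : (X - C a)^2 ∣ p) :
    p.derivative.eval a = 0 := by
  obtain ⟨r, rfl⟩ := h
  simp [derivative_mul, derivative_pow]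

lemma rootMult_pow (a : ℂ) {p : ℂ[X]} (hp : p ≠ 0) (n : ℕ) :
    rootMultiplicity a (p ^ n) = n * rootMultiplicity a p := by
  induction n with
  | zero => simp [rootMultiplicity_eq_zero]
  | succ n ih =>
    rw [pow_succ, rootMultiplicity_mul (mul_ne_zero (pow_ne_zero _ hp) hp), ih]
    ring

lemma rootMult_eq_one {u : ℂ[X]} {τ : ℂ} (hd : u.derivative.eval τ ≠ 0) :
    rootMultiplicity τ (u - C (u.eval τ)) = 1 := by
  have hne : u - C (u.eval τ) ≠ 0 := by
    intro h
    have : u = C (u.eval τ) := by linear_combination (norm := ring_nf) h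
    rw [this] at hd
    simp at hd
  have h1 : 1 ≤ rootMultiplicity τ (u - C (u.eval τ)) := by
    rw [le_rootMultiplicity_iff hne, pow_one, dvd_iff_isRoot]
    simp [IsRoot]
  have h2 : rootMultiplicity τ (u - C (u.eval τ)) < 2 := by
    by_contra h
    push_neg at h
    have hdvd : (X - C τ)^2 ∣ (u - C (u.eval τ)) :=
      (le_rootMultiplicity_iff hne).mp h
    have := deriv_eval_zero_of_sq_dvd hdvd
    simp at this
    exact hd this
  omega

/-- transfer of divisibility through composition -/
lemma dvd_of_comp_dvd {g u Q : ℂ[X]} (hg : g ≠ 0) {τ : ℂ} (hτ : g.IsRoot τ)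
    (hder : 2 ≤ g.rootMultiplicity τ → u.derivative.eval τ ≠ 0)
    (hQ : Q ≠ 0) (h : g ∣ Q.comp u) :
    (X - C (u.eval τ))^(g.rootMultiplicity τ) ∣ Q := by
  set a := u.eval τ with ha
  set m := g.rootMultiplicity τ with hm
  set k := rootMultiplicity a Q with hk
  -- decomposition of Q
  have hdec : (X - C a)^k * (Q /ₘ (X - C a)^k) = Q :=
    Polynomial.pow_mul_divByMonic_rootMultiplicity_eq Q a
  set Q₁ := Q /ₘ (X - C a)^k with hQ₁
  have hQ₁a : Q₁.eval a ≠ 0 := Polynomial.eval_divByMonic_pow_rootMultiplicity_ne_zero a hQ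
  suffices hmk : m ≤ k by
    exact dvd_trans (pow_dvd_pow _ hmk) ⟨Q₁, hdec.symm⟩
  -- Q.comp u = (u - C a)^k * Q₁.comp u
  have hcomp : Q.comp u = (u - C a)^k * (Q₁.comp u) := by
    conv_lhs => rw [← hdec]
    rw [mul_comp, pow_comp, sub_comp, X_comp, C_comp]
  have hXm : (X - C τ)^m ∣ Q.comp u :=
    dvd_trans (Polynomial.pow_rootMultiplicity_dvd g τ) h
  have hQ₁compτ : (Q₁.comp u).eval τ ≠ 0 := by
    rw [eval_comp]; exact hQ₁a
  have hQ₁comp : Q₁.comp u ≠ 0 := fun h0 => hQ₁compτ (by rw [h0]; simp)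
  rcases Nat.lt_or_ge m 2 with hm2 | hm2
  · -- m ≤ 1 : just need 1 ≤ k, i.e. Q(a) = 0
    have hm1 : m = 1 := by
      have : 1 ≤ m := (Polynomial.rootMultiplicity_pos hg).mpr hτ
      omega
    rw [hm1]
    have hQa : Q.eval a = 0 := by
      have : (Q.comp u).eval τ = 0 := by
        apply eval_eq_zero_of_dvd_of_eval_eq_zero hXm
        rw [hm1]; simp
      rwa [eval_comp] at this
    have : 1 ≤ k := (Polynomial.rootMultiplicity_pos hQ).mpr hQa
    omega
  · -- m ≥ 2: use derivative
    have hu' : u.derivative.eval τ ≠ 0 := hder hm2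
    have huc : u - C a ≠ 0 := by
      intro h0
      have : u = C a := by linear_combination (norm := ring_nf) h0
      rw [this] at hu'; simp at hu'
    have hQcomp : Q.comp u ≠ 0 := by
      rw [hcomp]
      exact mul_ne_zero (pow_ne_zero _ huc) hQ₁comp
    have hcount : rootMultiplicity τ (Q.comp u) = k := by
      rw [hcomp, rootMultiplicity_mul (hcomp ▸ hQcomp), rootMult_pow τ huc,
        rootMult_eq_one hu', rootMultiplicity_eq_zero hQ₁compτ]
      ring
    have : m ≤ rootMultiplicity τ (Q.comp u) :=
      (le_rootMultiplicity_iff hQcomp).mpr hXm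
    omega

/-- the key surjectivity lemma -/
lemma key_surj (g u : ℂ[X]) (hg : g ≠ 0)
    (hsep : ∀ τ σ, g.IsRoot τ → g.IsRoot σ → τ ≠ σ → u.eval τ ≠ u.eval σ)
    (hder : ∀ τ, 2 ≤ g.rootMultiplicity τ → u.derivative.eval τ ≠ 0)
    (w : ℂ[X]) : ∃ Q : ℂ[X], g ∣ Q.comp u - w := by
  classical
  set S := g.roots.toFinset with hS
  set P : ℂ[X] := ∏ τ ∈ S, (X - C (u.eval τ))^(g.rootMultiplicity τ) with hP
  have hProotS : ∀ τ ∈ S, g.IsRoot τ := fun τ hτ =>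
    (mem_roots hg).mp (Multiset.mem_toFinset.mp hτ)
  have hPmonic : P.Monic :=
    monic_prod_of_monic _ _ fun τ _ => (monic_X_sub_C _).pow _
  have hPne : P ≠ 0 := hPmonic.ne_zero
  -- degree of P
  have hcard : Multiset.card g.roots = g.natDegree :=
    (splits_iff_card_roots).mp (IsAlgClosed.splits g)
  have hPdeg : P.natDegree = g.natDegree := by
    rw [hP, natDegree_prod _ _ (fun τ _ => pow_ne_zero _ (X_sub_C_ne_zero _))]
    have : ∀ τ ∈ S, ((X - C (u.eval τ))^(g.rootMultiplicity τ)).natDegree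
        = g.rootMultiplicity τ := by
      intro τ _
      rw [natDegree_pow, natDegree_X_sub_C, mul_one]
    rw [Finset.sum_congr rfl this]
    rw [← hcard, hS]
    have := Multiset.toFinset_sum_count_eq g.roots
    simp only [← Polynomial.count_roots]
    exact this
  -- g divides P.comp u
  have hgP : g ∣ P.comp u := by
    have hgfact : g = C g.leadingCoeff *
        ∏ τ ∈ S, (X - C τ)^(g.rootMultiplicity τ) := by
      conv_lhs => rw [← Polynomial.C_leadingCoeff_mul_prod_multiset_X_sub_C hcard]
      congr 1
      rw [Finset.prod_multiset_map_count]
      exact Finset.prod_congr rfl fun τ _ => by rw [Polynomial.count_roots]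
    have hdvd1 : (∏ τ ∈ S, (X - C τ)^(g.rootMultiplicity τ)) ∣ P.comp u := by
      have : P.comp u = ∏ τ ∈ S, ((u - C (u.eval τ))^(g.rootMultiplicity τ)) := by
        rw [hP, prod_comp]
        exact Finset.prod_congr rfl fun τ _ => by
          rw [pow_comp, sub_comp, X_comp, C_comp]
      rw [this]
      apply Finset.prod_dvd_prod_of_dvd
      intro τ _
      apply pow_dvd_pow_of_dvd
      rw [dvd_iff_isRoot]
      simp [IsRoot]
    have hlc : g.leadingCoeff ≠ 0 := leadingCoeff_ne_zero.mpr hg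
    obtain ⟨c, hc0, hgfact'⟩ : ∃ c : ℂ, c ≠ 0 ∧
        g = C c * ∏ τ ∈ S, (X - C τ)^(g.rootMultiplicity τ) := ⟨g.leadingCoeff, hlc, hgfact⟩
    have hgM : g ∣ ∏ τ ∈ S, (X - C τ)^(g.rootMultiplicity τ) := by
      refine ⟨C c⁻¹, ?_⟩
      conv_rhs => rw [hgfact']
      rw [mul_right_comm, ← Polynomial.C_mul, mul_inv_cancel₀ hc0,
        Polynomial.C_1, one_mul]
    exact dvd_trans hgM hdvd1
  -- the algebra map
  have haev : (Polynomial.aeval (AdjoinRoot.mk g u)) P = 0 := by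
    have : (Polynomial.aeval (AdjoinRoot.mk g u)) P = AdjoinRoot.mk g (P.comp u) := by
      rw [Polynomial.aeval_def, Polynomial.comp_eq_aeval, Polynomial.aeval_def]
      rw [Polynomial.hom_eval₂]
      congr 1
    rw [this, AdjoinRoot.mk_eq_zero]
    exact hgP
  let φ : AdjoinRoot P →ₐ[ℂ] AdjoinRoot g := AdjoinRoot.liftAlgHom P (Algebra.ofId ℂ _) (AdjoinRoot.mk g u) haev
  have hφmk : ∀ Q : ℂ[X], φ (AdjoinRoot.mk P Q) = AdjoinRoot.mk g (Q.comp u) := by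
    intro Q
    change (Polynomial.aeval (AdjoinRoot.mk g u)) Q = _
    rw [Polynomial.comp_eq_aeval, Polynomial.aeval_def, Polynomial.aeval_def,
      Polynomial.hom_eval₂]
    congr 1
  -- injectivity
  have hinj : Function.Injective φ := by
    rw [injective_iff_map_eq_zero]
    intro x hx
    obtain ⟨Q, rfl⟩ := AdjoinRoot.mk_surjective x
    rw [hφmk, AdjoinRoot.mk_eq_zero] at hx
    rw [AdjoinRoot.mk_eq_zero]
    by_cases hQ : Q = 0
    · exact hQ ▸ dvd_zero _
    -- P ∣ Q
    apply Finset.prod_dvd_of_coprime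
    · intro τ hτ σ hσ hne
      have : u.eval τ ≠ u.eval σ := hsep τ σ (hProotS τ hτ) (hProotS σ hσ) hne
      exact (isCoprime_X_sub_C_of_isUnit_sub (IsUnit.mk0 _ (sub_ne_zero.mpr this))).pow
    · intro τ hτ
      exact dvd_of_comp_dvd hg (hProotS τ hτ) (hder τ) hQ hx
  -- surjectivity via finrank
  have : FiniteDimensional ℂ (AdjoinRoot P) := (AdjoinRoot.powerBasis hPne).finite
  have : FiniteDimensional ℂ (AdjoinRoot g) := (AdjoinRoot.powerBasis hg).finite
  have hfr : Module.finrank ℂ (AdjoinRoot P) = Module.finrank ℂ (AdjoinRoot g) := by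
    rw [(AdjoinRoot.powerBasis hPne).finrank, (AdjoinRoot.powerBasis hg).finrank]
    exact hPdeg
  have hsurj : Function.Surjective φ := by
    have := (LinearMap.injective_iff_surjective_of_finrank_eq_finrank
      (f := φ.toLinearMap) hfr).mp hinj
    exact this
  obtain ⟨x, hx⟩ := hsurj (AdjoinRoot.mk g w)
  obtain ⟨Q, rfl⟩ := AdjoinRoot.mk_surjective x
  rw [hφmk] at hx
  refine ⟨Q, ?_⟩
  rw [← AdjoinRoot.mk_eq_zero, map_sub, hx, sub_self]

lemma exists_inv (g u : ℂ[X]) (hg : g ≠ 0) (hroot : ∀ τ, g.IsRoot τ → u.eval τ ≠ 0) :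
    ∃ v, g ∣ u * v - 1 := by
  classical
  have hcop : IsCoprime u g := by
    rw [← EuclideanDomain.gcd_isUnit_iff]
    by_contra hne
    set d := EuclideanDomain.gcd u g with hd
    have hd0 : d ≠ 0 := fun h0 => hg (by
      have := EuclideanDomain.gcd_dvd_right u g
      rw [← hd, h0] at this
      exact eq_zero_of_zero_dvd this)
    have hdeg : d.degree ≠ 0 := fun h0 => hne (Polynomial.isUnit_iff_degree_eq_zero.mpr h0)
    obtain ⟨τ, hτ⟩ := IsAlgClosed.exists_root d hdeg
    have hτg : g.IsRoot τ := eval_eq_zero_of_dvd_of_eval_eq_zero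
      (EuclideanDomain.gcd_dvd_right u g) hτ
    have hτu : u.eval τ = 0 := eval_eq_zero_of_dvd_of_eval_eq_zero
      (EuclideanDomain.gcd_dvd_left u g) hτ
    exact hroot τ hτg hτu
  obtain ⟨a, b, hab⟩ := hcop
  exact ⟨a, ⟨-b, by linear_combination hab⟩⟩

theorem stmt_12 (g₁ g₂ g₃ : Polynomial ℂ)
    (hinj : Function.Injective fun t : ℂ => ![g₁.eval t, g₂.eval t, g₃.eval t])
    (hproper : IsProperMap fun t : ℂ => ![g₁.eval t, g₂.eval t, g₃.eval t])
    (himm : ∀ t : ℂ, ¬(g₁.derivative.eval t = 0 ∧ g₂.derivative.eval t = 0 ∧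
      g₃.derivative.eval t = 0)) :
    ∃ ψ : Equiv.Perm (Fin 3 → ℂ), IsTame 3 ψ ∧
      ∃ h₁ h₂ h₃ : Polynomial ℂ,
        (∀ t : ℂ, ψ ![g₁.eval t, g₂.eval t, g₃.eval t] =
          ![h₁.eval t, h₂.eval t, h₃.eval t]) ∧
        h₂ ∣ h₁ * h₃ - 1 := by
  classical
  by_cases hdeg : g₂.natDegree = 0
  · -- g₂ is constant : translate the y-coordinate to 1
    obtain ⟨c, hc⟩ := Polynomial.natDegree_eq_zero.mp hdeg
    refine ⟨transY (1 - c), Subgroup.subset_closure (Or.inl (transY_affine _)),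
      g₁, 1, g₃, ?_, by simpa using one_dvd (g₁ * g₃ - 1)⟩
    intro t
    funext i
    fin_cases i <;> simp [transY, Function.update, ← hc] <;> ring
  · -- main case
    have hg2 : g₂ ≠ 0 := fun h => hdeg (by simp [h])
    set R : Finset ℂ := g₂.roots.toFinset with hR
    have hmemR : ∀ τ, g₂.IsRoot τ → τ ∈ R := fun τ h =>
      Multiset.mem_toFinset.mpr ((mem_roots hg2).mpr h)
    set B₁ : Finset ℂ := (R ×ˢ R).image
      (fun p => (g₁.eval p.2 - g₁.eval p.1) / (g₃.eval p.1 - g₃.eval p.2)) with hB₁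
    set B₂ : Finset ℂ := R.image
      (fun τ => -(g₁.derivative.eval τ) / (g₃.derivative.eval τ)) with hB₂
    obtain ⟨l, hl⟩ := Finset.exists_notMem (B₁ ∪ B₂)
    have hlB₁ : l ∉ B₁ := fun h => hl (Finset.mem_union_left _ h)
    have hlB₂ : l ∉ B₂ := fun h => hl (Finset.mem_union_right _ h)
    set u₀ : ℂ[X] := g₁ + Polynomial.C l * g₃ with hu₀
    obtain ⟨m, hm⟩ := Finset.exists_notMem (R.image (fun τ => -(u₀.eval τ)))
    set u : ℂ[X] := u₀ + Polynomial.C m with hu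
    have hueval : ∀ t, u.eval t = g₁.eval t + l * g₃.eval t + m := by
      intro t; simp [hu, hu₀]
    have huder : ∀ t, u.derivative.eval t
        = g₁.derivative.eval t + l * g₃.derivative.eval t := by
      intro t
      simp [hu, hu₀, derivative_add, derivative_C_mul]
    -- separation of values
    have hsep : ∀ τ σ, g₂.IsRoot τ → g₂.IsRoot σ → τ ≠ σ → u.eval τ ≠ u.eval σ := by
      intro τ σ hτ hσ hne heq
      rw [hueval, hueval] at heq
      by_cases h3 : g₃.eval τ = g₃.eval σ
      · have h1 : g₁.eval τ = g₁.eval σ := by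
          rw [h3] at heq
          linear_combination heq
        exact hne (hinj (by
          funext i
          fin_cases i <;> simp [h1, h3, hτ.eq_zero, hσ.eq_zero]))
      · apply hlB₁
        rw [hB₁]
        apply Finset.mem_image.mpr
        refine ⟨(τ, σ), Finset.mem_product.mpr ⟨hmemR τ hτ, hmemR σ hσ⟩, ?_⟩
        have h3' : g₃.eval τ - g₃.eval σ ≠ 0 := sub_ne_zero.mpr h3
        rw [div_eq_iff h3']
        linear_combination -heq
    -- derivative condition
    have hder : ∀ τ, 2 ≤ g₂.rootMultiplicity τ → u.derivative.eval τ ≠ 0 := by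
      intro τ hmul heq0
      have hroot : g₂.IsRoot τ := by
        have : 1 ≤ g₂.rootMultiplicity τ := le_trans (by norm_num) hmul
        exact (Polynomial.rootMultiplicity_pos hg2).mp this
      have h2' : g₂.derivative.eval τ = 0 := by
        apply deriv_eval_zero_of_sq_dvd
        exact (le_rootMultiplicity_iff hg2).mp hmul
      rw [huder] at heq0
      by_cases h3 : g₃.derivative.eval τ = 0
      · rw [h3] at heq0
        exact himm τ ⟨by linear_combination heq0, h2', h3⟩
      · apply hlB₂
        rw [hB₂]
        apply Finset.mem_image.mpr
        refine ⟨τ, hmemR τ hroot, ?_⟩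
        rw [div_eq_iff h3]
        linear_combination -heq0
    -- non-vanishing
    have hnz : ∀ τ, g₂.IsRoot τ → u.eval τ ≠ 0 := by
      intro τ hτ h0
      apply hm
      apply Finset.mem_image.mpr
      refine ⟨τ, hmemR τ hτ, ?_⟩
      have : u.eval τ = u₀.eval τ + m := by simp [hu]
      rw [this] at h0
      linear_combination -h0
    obtain ⟨v, hv⟩ := exists_inv g₂ u hg2 hnz
    obtain ⟨Q, hQ⟩ := key_surj g₂ u hg2 hsep hder (v - g₃)
    refine ⟨shearZ Q * shearX l m, ?_, u, g₂, g₃ + Q.comp u, ?_, ?_⟩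
    · exact Subgroup.mul_mem _
        (Subgroup.subset_closure (Or.inr (shearZ_elem Q)))
        (Subgroup.subset_closure (Or.inl (shearX_affine l m)))
    · intro t
      have h0 : (shearX l m) ![g₁.eval t, g₂.eval t, g₃.eval t]
          = ![u.eval t, g₂.eval t, g₃.eval t] := by
        funext i
        fin_cases i <;> simp [shearX, Function.update, hueval] <;> ring
      rw [Equiv.Perm.mul_apply, h0]
      funext i
      fin_cases i <;>
        simp [shearZ, Function.update, Polynomial.eval_comp]
    · have hkey : u * (g₃ + Q.comp u) - 1
          = u * (Q.comp u - (v - g₃)) + (u * v - 1) := by ring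
      rw [hkey]
      exact dvd_add (Dvd.dvd.mul_left hQ u) hv
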